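/- Let n ≥ 1, let x ∈ ℂⁿ be nonzero and let y ∈ ℂⁿ be nonzero. Consider the ℂ-subspace W of n×n complex matrices defined by W = {A : Aᵀ = A and A·x ∈ span_ℂ{y}} (where A·x = Matrix.mulVec A x). Then W is a linear subspace of the space of symmetric matrices of dimension finrank_ℂ W = n(n+1)/2 − (n−1). -/

import Mathlib

open Matrix FiniteDimensional

private lemma vecMulVec_mulVec' {n : ℕ} (w v x : Fin n → ℂ) :
    (vecMulVec w v).mulVec x = (v ⬝ᵥ x) • w := by
  ext i; simp [vecMulVec, mulVec, dotProduct, Finset.mul_sum, mul_assoc, mul_comm, mul_left_comm]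

private lemma exists_symm_mulVec {n : ℕ} {x : Fin n → ℂ} (hx : x ≠ 0) (v : Fin n → ℂ) :
    ∃ A : Matrix (Fin n) (Fin n) ℂ, A.transpose = A ∧ A.mulVec x = v := by
  obtain ⟨i, hi⟩ := Function.ne_iff.1 hx
  simp only [Pi.zero_apply] at hi
  set e : Fin n → ℂ := Pi.single i 1 with he
  have hex : e ⬝ᵥ x = x i := by simp [he, dotProduct, Pi.single_apply]
  refine ⟨(x i)⁻¹ • (vecMulVec v e + vecMulVec e v)
      - ((v ⬝ᵥ x) * (x i)⁻¹ * (x i)⁻¹) • vecMulVec e e, ?_, ?_⟩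
  · ext a b
    simp [vecMulVec, transpose]
    ring
  · rw [sub_mulVec, smul_mulVec, smul_mulVec, add_mulVec]
    simp only [vecMulVec_mulVec', hex]
    ext k
    simp only [Pi.sub_apply, Pi.smul_apply, Pi.add_apply, smul_eq_mul]
    field_simp
    ring

private noncomputable def symmS (n : ℕ) : Submodule ℂ (Matrix (Fin n) (Fin n) ℂ) where
  carrier := {A | A.transpose = A}
  add_mem' := by intro a b ha hb; simp_all [transpose_add]
  zero_mem' := by simp
  smul_mem' := by intro c a ha; simp_all [transpose_smul]

private noncomputable def symMap (n : ℕ) : (Sym2 (Fin n) → ℂ) →ₗ[ℂ] Matrix (Fin n) (Fin n) ℂ where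
  toFun f := Matrix.of fun i j => f s(i, j)
  map_add' _ _ := rfl
  map_smul' _ _ := rfl

private lemma symMap_inj (n : ℕ) : Function.Injective (symMap n) := by
  intro f g h
  funext s
  induction s using Sym2.ind with
  | _ i j => exact congrFun (congrFun h i) j

private lemma symMap_range (n : ℕ) : LinearMap.range (symMap n) = symmS n := by
  apply le_antisymm
  · rintro _ ⟨f, rfl⟩
    show Matrix.transpose _ = _
    ext i j
    simp only [symMap, transpose_apply, LinearMap.coe_mk, AddHom.coe_mk, of_apply]
    exact congrArg f Sym2.eq_swap
  · intro A hA
    have hA' : A.transpose = A := hA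
    refine ⟨Sym2.lift ⟨fun i j => A i j, fun i j => ?_⟩, ?_⟩
    · conv_lhs => rw [← hA']
      rfl
    · ext i j; simp [symMap]; rfl

private lemma finrank_symmS (n : ℕ) : Module.finrank ℂ (symmS n) = n * (n + 1) / 2 := by
  rw [← symMap_range, LinearMap.finrank_range_of_inj (symMap_inj n)]
  rw [Module.finrank_pi, Sym2.card, Nat.choose_two_right]
  simp [Nat.mul_comm]

/-- For nonzero `x, y ∈ ℂⁿ` (`n ≥ 1`), the subspace
`W = {A : Aᵀ = A ∧ A·x ∈ span{y}}` of `n×n` complex matrices has dimension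
`n(n+1)/2 − (n−1)`. -/
theorem dim_symm_matrices_mulVec_in_line (n : ℕ) (hn : 1 ≤ n)
    (x y : Fin n → ℂ) (hx : x ≠ 0) (hy : y ≠ 0)
    (W : Submodule ℂ (Matrix (Fin n) (Fin n) ℂ))
    (hW : ∀ A : Matrix (Fin n) (Fin n) ℂ,
      A ∈ W ↔ (A.transpose = A ∧ A.mulVec x ∈ Submodule.span ℂ {y})) :
    Module.finrank ℂ W = n * (n + 1) / 2 - (n - 1) := by
  classical
  set Y : Submodule ℂ (Fin n → ℂ) := Submodule.span ℂ {y} with hY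
  -- linear map A ↦ A.mulVec x
  let F : Matrix (Fin n) (Fin n) ℂ →ₗ[ℂ] (Fin n → ℂ) :=
    { toFun := fun A => A.mulVec x
      map_add' := fun A B => Matrix.add_mulVec A B x
      map_smul' := fun c A => Matrix.smul_mulVec c A x }
  let L : (symmS n) →ₗ[ℂ] ((Fin n → ℂ) ⧸ Y) := (Y.mkQ.comp F).domRestrict (symmS n)
  -- the kernel of L corresponds to W
  have hker : LinearMap.ker L = W.comap (symmS n).subtype := by
    ext ⟨A, hA⟩
    have hA' : A.transpose = A := hA
    simp [L, F, LinearMap.mem_ker, Submodule.Quotient.mk_eq_zero, hW, hA', Y,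
      Submodule.mkQ_apply]
  -- L is surjective
  have hsurj : LinearMap.range L = ⊤ := by
    rw [LinearMap.range_eq_top]
    intro q
    obtain ⟨v, rfl⟩ := Y.mkQ_surjective q
    obtain ⟨A, hAsymm, hAv⟩ := exists_symm_mulVec hx v
    exact ⟨⟨A, hAsymm⟩, by simp [L, F, hAv]⟩
  -- rank-nullity
  have hrn := LinearMap.finrank_range_add_finrank_ker L
  rw [hsurj, hker] at hrn
  have hq : Module.finrank ℂ ((Fin n → ℂ) ⧸ Y) + 1 = n := by
    have := Submodule.finrank_quotient_add_finrank Y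
    rw [hY, finrank_span_singleton hy] at this
    simpa [Module.finrank_pi, Fintype.card_fin] using this
  have htop : Module.finrank ℂ (⊤ : Submodule ℂ ((Fin n → ℂ) ⧸ Y)) =
      Module.finrank ℂ ((Fin n → ℂ) ⧸ Y) := finrank_top ℂ _
  have hWle : W ≤ symmS n := fun A hA => ((hW A).1 hA).1
  have hWrank : Module.finrank ℂ (W.comap (symmS n).subtype) = Module.finrank ℂ W := by
    rw [← Submodule.finrank_map_subtype_eq (symmS n) (W.comap (symmS n).subtype),
      Submodule.map_comap_subtype, inf_eq_right.2 hWle]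
  rw [htop, hWrank, finrank_symmS] at hrn
  omega
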